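/- Let γ > 0, κ > 0, τ > 0, and let L be a real m × m matrix with ‖exp(t L_κ)‖_∞ ≤ e^{−κt} for all t ≥ 0, where L_κ = L − κI. Let N : ℝ^m → ℝ^m satisfy ‖N(w)‖ ≤ κγ whenever ‖w‖ ≤ γ. Then for every uⁿ ∈ ℝ^m with ‖uⁿ‖ ≤ γ, the sIFRK(1,1) update u^{n+1} = exp(τ L_κ)(uⁿ + τ N(uⁿ)) satisfies ‖u^{n+1}‖ ≤ (1 + κτ) e^{−κτ} γ ≤ γ. -/

import Mathlib

attribute [local instance] Matrix.linftyOpNormedRing Matrix.linftyOpNormedAlgebra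

/-- Unconditional discrete MBP of sIFRK(1,1) with the sharp bound: if `‖uⁿ‖ ≤ γ`, then
`u^{n+1} = exp(τL_κ)(uⁿ + τN(uⁿ))` satisfies `‖u^{n+1}‖ ≤ (1+κτ)e^{−κτ}γ ≤ γ`. -/
theorem stmt_18 (m : ℕ) (γ κ τ : ℝ) (hγ : 0 < γ) (hκ : 0 < κ) (hτ : 0 < τ)
    (L Lκ : Matrix (Fin m) (Fin m) ℝ)
    (hLκ : Lκ = L - κ • (1 : Matrix (Fin m) (Fin m) ℝ))
    (hsemi : ∀ t : ℝ, 0 ≤ t → ‖NormedSpace.exp (t • Lκ)‖ ≤ Real.exp (-κ * t))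
    (N : (Fin m → ℝ) → (Fin m → ℝ))
    (hN : ∀ w : Fin m → ℝ, ‖w‖ ≤ γ → ‖N w‖ ≤ κ * γ)
    (un : Fin m → ℝ) (hun : ‖un‖ ≤ γ) :
    ‖(NormedSpace.exp (τ • Lκ)).mulVec (un + τ • N un)‖ ≤
        (1 + κ * τ) * Real.exp (-κ * τ) * γ ∧
      (1 + κ * τ) * Real.exp (-κ * τ) * γ ≤ γ := by
  have hE : ‖NormedSpace.exp (τ • Lκ)‖ ≤ Real.exp (-κ * τ) := hsemi τ hτ.le
  have hv : ‖un + τ • N un‖ ≤ (1 + κ * τ) * γ := by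
    calc ‖un + τ • N un‖ ≤ ‖un‖ + ‖τ • N un‖ := norm_add_le _ _
      _ = ‖un‖ + |τ| * ‖N un‖ := by rw [norm_smul, Real.norm_eq_abs]
      _ ≤ γ + τ * (κ * γ) := by
          rw [abs_of_pos hτ]
          exact add_le_add hun (mul_le_mul_of_nonneg_left (hN un hun) hτ.le)
      _ = (1 + κ * τ) * γ := by ring
  constructor
  · calc ‖(NormedSpace.exp (τ • Lκ)).mulVec (un + τ • N un)‖
        ≤ ‖NormedSpace.exp (τ • Lκ)‖ * ‖un + τ • N un‖ :=
          Matrix.linfty_opNorm_mulVec _ _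
      _ ≤ Real.exp (-κ * τ) * ((1 + κ * τ) * γ) := by
          apply mul_le_mul hE hv (norm_nonneg _) (Real.exp_pos _).le
      _ = (1 + κ * τ) * Real.exp (-κ * τ) * γ := by ring
  · have h1 : (1 + κ * τ) * Real.exp (-κ * τ) ≤ 1 := by
      rw [neg_mul, Real.exp_neg]
      rw [mul_inv_le_iff₀ (Real.exp_pos _), one_mul]
      have := Real.add_one_le_exp (κ * τ)
      linarith
    calc (1 + κ * τ) * Real.exp (-κ * τ) * γ ≤ 1 * γ :=
          mul_le_mul_of_nonneg_right h1 hγ.le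
      _ = γ := one_mul γ
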